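/- For all natural numbers n ≥ 2 and m with 1 ≤ m ≤ n-1, the sum over p from 0 to m of (-1)^p * (n-p-1)/(n-p+1) * C(m,p) equals 2*(-1)^(m-1) / ((n+1) * C(n,m)), where C denotes the binomial coefficient. -/

import Mathlib

theorem key : ∀ m : ℕ, 1 ≤ m → ∀ n : ℕ, 2 ≤ n → m ≤ n - 1 →
    ∑ p ∈ Finset.range (m + 1),
      (-1 : ℚ) ^ p * ((n : ℚ) - p - 1) / ((n : ℚ) - p + 1) * (Nat.choose m p : ℚ) =
      2 * (-1 : ℚ) ^ (m - 1) / (((n : ℚ) + 1) * (Nat.choose n m : ℚ)) := by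
  intro m hm1
  induction m, hm1 using Nat.le_induction with
  | base =>
    intro n hn hm
    have hn0 : (n : ℚ) ≠ 0 := by
      exact_mod_cast (by omega : n ≠ 0)
    have hn1 : (n : ℚ) + 1 ≠ 0 := by positivity
    rw [Finset.sum_range_succ, Finset.sum_range_succ, Finset.sum_range_zero,
      Nat.choose_one_right]
    simp only [Nat.choose_self, Nat.choose_zero_right, Nat.choose_one_right, Nat.cast_one, Nat.cast_ofNat]
    push_cast
    simp only [sub_zero, sub_add_cancel]
    field_simp
    ring
  | succ m hm1 IH =>
    intro n hn hm
    have hn3 : 3 ≤ n := by omega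
    have IH1 := IH n hn (by omega)
    have IH2 := IH (n - 1) (by omega) (by omega)
    have hc : ((n - 1 : ℕ) : ℚ) = (n : ℚ) - 1 := by
      push_cast [Nat.cast_sub (by omega : 1 ≤ n)]; ring
    rw [hc] at IH2
    -- expand each term of the sum at index i+1
    have expand : ∀ i : ℕ,
        (-1 : ℚ) ^ (i+1) * ((n : ℚ) - (i+1 : ℕ) - 1) / ((n : ℚ) - (i+1 : ℕ) + 1) *
          (Nat.choose (m+1) (i+1) : ℚ)
        = -((-1 : ℚ) ^ i * (((n : ℚ) - 1) - i - 1) / (((n : ℚ) - 1) - i + 1) *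
            (Nat.choose m i : ℚ))
          + (-1 : ℚ) ^ (i+1) * ((n : ℚ) - (i+1 : ℕ) - 1) / ((n : ℚ) - (i+1 : ℕ) + 1) *
            (Nat.choose m (i+1) : ℚ) := by
      intro i
      rw [Nat.choose_succ_succ]
      push_cast
      ring
    rw [Finset.sum_range_succ']
    rw [Finset.sum_congr rfl fun i _ => expand i, Finset.sum_add_distrib]
    -- first sum is -S(n-1, m)
    rw [Finset.sum_neg_distrib, IH2]
    -- second sum: drop the zero last term, then relate to S(n, m)
    have h2 : (∑ i ∈ Finset.range (m+1),
        (-1 : ℚ) ^ (i+1) * ((n : ℚ) - (i+1 : ℕ) - 1) / ((n : ℚ) - (i+1 : ℕ) + 1) *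
          (Nat.choose m (i+1) : ℚ))
        = ∑ i ∈ Finset.range m,
        (-1 : ℚ) ^ (i+1) * ((n : ℚ) - (i+1 : ℕ) - 1) / ((n : ℚ) - (i+1 : ℕ) + 1) *
          (Nat.choose m (i+1) : ℚ) := by
      rw [Finset.sum_range_succ, Nat.choose_succ_self]
      simp
    have h3 : (∑ i ∈ Finset.range m,
        (-1 : ℚ) ^ (i+1) * ((n : ℚ) - (i+1 : ℕ) - 1) / ((n : ℚ) - (i+1 : ℕ) + 1) *
          (Nat.choose m (i+1) : ℚ))
        = 2 * (-1 : ℚ) ^ (m - 1) / (((n : ℚ) + 1) * (Nat.choose n m : ℚ))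
          - (-1 : ℚ) ^ 0 * ((n : ℚ) - (0 : ℕ) - 1) / ((n : ℚ) - (0 : ℕ) + 1) *
            (Nat.choose m 0 : ℚ) := by
      rw [← IH1, Finset.sum_range_succ']
      ring
    rw [h2, h3]
    -- now pure algebra with choose identities
    have hn0 : (n : ℚ) ≠ 0 := by exact_mod_cast (by omega : n ≠ 0)
    have hn1 : (n : ℚ) + 1 ≠ 0 := by positivity
    have hm0 : (m : ℚ) + 1 ≠ 0 := by positivity
    have hnm : (n : ℚ) - (m : ℚ) ≠ 0 := by
      have : (m : ℚ) < n := by exact_mod_cast (by omega : m < n)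
      intro h; linarith
    have hcnm : (Nat.choose n m : ℚ) ≠ 0 := by
      exact_mod_cast (Nat.choose_pos (by omega : m ≤ n)).ne'
    have hA : (n : ℚ) * (Nat.choose (n-1) m : ℚ) = (Nat.choose n (m+1) : ℚ) * ((m : ℚ) + 1) := by
      have h := Nat.add_one_mul_choose_eq (n-1) m
      rw [Nat.sub_add_cancel (by omega : 1 ≤ n)] at h
      exact_mod_cast h
    have hB : (Nat.choose n (m+1) : ℚ) * ((m : ℚ) + 1) = (Nat.choose n m : ℚ) * ((n : ℚ) - m) := by
      have := Nat.choose_succ_right_eq n m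
      have h4 : ((n - m : ℕ) : ℚ) = (n : ℚ) - m := by
        push_cast [Nat.cast_sub (by omega : m ≤ n)]; ring
      calc (Nat.choose n (m+1) : ℚ) * ((m : ℚ) + 1)
          = ((Nat.choose n (m+1) * (m+1) : ℕ) : ℚ) := by push_cast; ring
        _ = ((Nat.choose n m * (n - m) : ℕ) : ℚ) := by rw [this]
        _ = (Nat.choose n m : ℚ) * ((n : ℚ) - m) := by push_cast [h4]; ring
    have hC1 : (Nat.choose n (m+1) : ℚ) = ((n:ℚ) - m) * (Nat.choose n m : ℚ) / ((m:ℚ)+1) := by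
      field_simp
      linarith [hB]
    have hC2 : (Nat.choose (n-1) m : ℚ) = ((n:ℚ) - m) * (Nat.choose n m : ℚ) / (n:ℚ) := by
      field_simp
      nlinarith [hA, hB]
    rw [hC1, hC2]
    have hmm : m = (m - 1) + 1 := by omega
    simp only [Nat.add_sub_cancel, Nat.choose_zero_right]
    rw [show (-1 : ℚ) ^ m = (-1) ^ (m - 1) * (-1) by rw [← pow_succ, ← hmm]]
    push_cast
    simp only [sub_zero, sub_add_cancel]
    field_simp
    ring

theorem stmt1 (n m : ℕ) (hn : 2 ≤ n) (hm1 : 1 ≤ m) (hm : m ≤ n - 1) :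
    ∑ p ∈ Finset.range (m + 1),
      (-1 : ℚ) ^ p * ((n : ℚ) - p - 1) / ((n : ℚ) - p + 1) * (Nat.choose m p : ℚ) =
      2 * (-1 : ℚ) ^ (m - 1) / (((n : ℚ) + 1) * (Nat.choose n m : ℚ)) := by
  exact key m hm1 n hn hm
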